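/- Fix an integer n ≥ 1 and let τ be the tau function of Σ(2,7,14n+3). Define M_i := 14i+1 for 0 ≤ i ≤ 2n; M_i := 14(n + i/2) + 1 for even i with 2n+1 ≤ i ≤ 4n and M_i := 14(n + (i-1)/2) + 7 for odd i with 2n+1 ≤ i ≤ 4n; and M_i := 14(i-n) + 1 for 4n+1 ≤ i ≤ 6n. Define m_i := 14i for 0 ≤ i ≤ 2n; m_i := 14(n + i/2) for even i with 2n+1 ≤ i ≤ 4n+1 and m_i := 14(n + (i-1)/2) + 6 for odd i with 2n+1 ≤ i ≤ 4n+1; and m_i := 14(i-n) - 8 for 4n+2 ≤ i ≤ 6n+1. Then: (a) τ(j+1) ≥ τ(j) whenever m_i ≤ j < M_i with 0 ≤ i ≤ 6n, τ(j+1) ≤ τ(j) whenever M_i ≤ j < m_{i+1} with 0 ≤ i ≤ 6n, and τ(j+1) ≥ τ(j) for all j ≥ m_{6n+1}; (b) τ(M_i) = 1-2i for 0 ≤ i ≤ n, τ(M_i) = 1-n-i for n+1 ≤ i ≤ 2n-1, τ(M_i) = 1-3n for 2n ≤ i ≤ 4n, τ(M_i) = 1-7n+i for 4n+1 ≤ i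 ≤ 5n, and τ(M_i) = 1-12n+2i for 5n+1 ≤ i ≤ 6n; (c) τ(m_i) = -2i for 0 ≤ i ≤ n, τ(m_i) = -n-i for n+1 ≤ i ≤ 2n-1, τ(m_i) = -3n for 2n ≤ i ≤ 4n+1, τ(m_i) = -1-7n+i for 4n+2 ≤ i ≤ 5n, and τ(m_i) = -2-12n+2i for 5n+1 ≤ i ≤ 6n+1. -/

import Mathlib

set_option maxHeartbeats 2000000

/-- `Δ_j = 1 + j - ⌈j/2⌉ - ⌈j/7⌉ - ⌈j(5n+1)/(14n+3)⌉` for the Seifert data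
`(-1, (2,1), (7,1), (14n+3, 5n+1))` of `Σ(2,7,14n+3)`. -/
noncomputable def delta27p3 (n j : ℤ) : ℤ :=
  1 + j - ⌈(j : ℚ) / 2⌉ - ⌈(j : ℚ) / 7⌉ - ⌈(j * (5 * n + 1) : ℚ) / (14 * n + 3 : ℚ)⌉

/-- The tau function `τ(k) = Σ_{j=0}^{k-1} Δ_j` of `Σ(2,7,14n+3)`. -/
noncomputable def tau27p3 (n k : ℤ) : ℤ := ∑ j ∈ Finset.range k.toNat, delta27p3 n (j : ℤ)

/-- `M_i = 14i+1` for `i ≤ 2n`; `M_i = 14(n + i/2) + 1` (`i` even) or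
`14(n + (i-1)/2) + 7` (`i` odd) for `2n+1 ≤ i ≤ 4n`; `M_i = 14(i-n) + 1` for `4n+1 ≤ i`. -/
def M27p3 (n i : ℤ) : ℤ :=
  if i ≤ 2 * n then 14 * i + 1
  else if i ≤ 4 * n then
    (if i % 2 = 0 then 14 * (n + i / 2) + 1 else 14 * (n + (i - 1) / 2) + 7)
  else 14 * (i - n) + 1

/-- `m_i = 14i` for `i ≤ 2n`; `m_i = 14(n + i/2)` (`i` even) or
`14(n + (i-1)/2) + 6` (`i` odd) for `2n+1 ≤ i ≤ 4n+1`; `m_i = 14(i-n) - 8` for `4n+2 ≤ i`. -/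
def m27p3 (n i : ℤ) : ℤ :=
  if i ≤ 2 * n then 14 * i
  else if i ≤ 4 * n + 1 then
    (if i % 2 = 0 then 14 * (n + i / 2) else 14 * (n + (i - 1) / 2) + 6)
  else 14 * (i - n) - 8

lemma ediv_eq_c (x q c : ℤ) (hq : 0 < q) (h1 : c * q ≤ x) (h2 : x < (c + 1) * q) :
    x / q = c := by
  have ha : c ≤ x / q := (Int.le_ediv_iff_mul_le hq).2 h1
  have hm := Int.mul_ediv_add_emod x q
  have hr := Int.emod_nonneg x (ne_of_gt hq)
  by_contra hne
  have hge : c + 1 ≤ x / q := by omega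
  have hmul : q * (c + 1) ≤ q * (x / q) := mul_le_mul_of_nonneg_left hge hq.le
  linarith

lemma ceil_int_div (a b : ℤ) (hb : 0 < b) : ⌈(a : ℚ) / (b : ℚ)⌉ = (a + b - 1) / b := by
  have hc : ((b.toNat : ℕ) : ℚ) = (b : ℚ) := by
    rw [← Int.cast_natCast, Int.toNat_of_nonneg hb.le]
  have key : ((a : ℚ) / (b : ℚ)) = -(((-a : ℤ) : ℚ) / ((b.toNat : ℕ) : ℚ)) := by
    rw [hc]; push_cast; ring
  rw [key, Int.ceil_neg, Rat.floor_intCast_div_natCast, Int.toNat_of_nonneg hb.le]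
  have hm := Int.mul_ediv_add_emod (-a) b
  have hr := Int.emod_nonneg (-a) (ne_of_gt hb)
  have hr2 := Int.emod_lt_of_pos (-a) hb
  rw [ediv_eq_c (a + b - 1) b (-(-a / b)) hb (by linarith) (by linarith)]

lemma delta_ediv (n j : ℤ) (hn : 1 ≤ n) :
    delta27p3 n j
      = 1 + j - (j + 1) / 2 - (j + 6) / 7 - (j * (5 * n + 1) + 14 * n + 2) / (14 * n + 3) := by
  unfold delta27p3
  have e1 : ⌈(j : ℚ) / 2⌉ = (j + 1) / 2 := by
    have := ceil_int_div j 2 (by norm_num)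
    norm_num at this ⊢
    rw [this]; congr 1; ring
  have e2 : ⌈(j : ℚ) / 7⌉ = (j + 6) / 7 := by
    have := ceil_int_div j 7 (by norm_num)
    norm_num at this ⊢
    rw [this]; congr 1; ring
  have e3 : ⌈(j * (5 * n + 1) : ℚ) / (14 * n + 3 : ℚ)⌉
      = (j * (5 * n + 1) + 14 * n + 2) / (14 * n + 3) := by
    have := ceil_int_div (j * (5 * n + 1)) (14 * n + 3) (by omega)
    have hcast : (((j * (5 * n + 1) : ℤ)) : ℚ) / (((14 * n + 3 : ℤ)) : ℚ)
        = (j * (5 * n + 1) : ℚ) / (14 * n + 3 : ℚ) := by push_cast; ring_nf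
    rw [hcast] at this
    rw [this]; congr 1; ring
  rw [e1, e2, e3]

lemma delta_val (n a b : ℤ) (hn : 1 ≤ n) (ha : 0 ≤ a) (ha2 : a ≤ 5 * n + 1)
    (hb : 0 ≤ b) (hb2 : b ≤ 13) :
    delta27p3 n (14 * a + b) =
      if b = 0 then 1
      else if b = 1 then (if a ≤ 5 * n then -1 else 0)
      else if b = 3 then (if a ≤ n - 1 then -1 else 0)
      else if b = 6 then (if a ≤ 2 * n - 1 then 0 else 1)
      else if b = 9 then (if a ≤ 3 * n - 1 then -1 else 0)
      else if b = 12 then (if a ≤ 4 * n - 1 then 0 else 1)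
      else 0 := by
  have hq : (0 : ℤ) < 14 * n + 3 := by omega
  rw [delta_ediv n _ hn]
  have key : (14 * a + b) * (5 * n + 1) + 14 * n + 2
      = (b * (5 * n + 1) - a + 14 * n + 2) + 5 * a * (14 * n + 3) := by ring
  rw [key, Int.add_mul_ediv_right _ _ (by omega : (14 * n + 3 : ℤ) ≠ 0)]
  interval_cases b
  · rw [ediv_eq_c _ (14 * n + 3) 0 hq (by omega) (by omega)]; norm_num; omega
  · rcases le_or_gt a (5 * n) with h | h
    · rw [ediv_eq_c _ (14 * n + 3) 1 hq (by omega) (by omega)]; norm_num [h]; omega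
    · rw [ediv_eq_c _ (14 * n + 3) 0 hq (by omega) (by omega)]; norm_num [h.not_ge]; omega
  · rw [ediv_eq_c _ (14 * n + 3) 1 hq (by omega) (by omega)]; norm_num; omega
  · rcases le_or_gt a (n - 1) with h | h
    · rw [ediv_eq_c _ (14 * n + 3) 2 hq (by omega) (by omega)]; norm_num [h]; omega
    · rw [ediv_eq_c _ (14 * n + 3) 1 hq (by omega) (by omega)]; norm_num [h.not_ge]; omega
  · rw [ediv_eq_c _ (14 * n + 3) 2 hq (by omega) (by omega)]; norm_num; omega
  · rw [ediv_eq_c _ (14 * n + 3) 2 hq (by omega) (by omega)]; norm_num; omega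
  · rcases le_or_gt a (2 * n - 1) with h | h
    · rw [ediv_eq_c _ (14 * n + 3) 3 hq (by omega) (by omega)]; norm_num [h]; omega
    · rw [ediv_eq_c _ (14 * n + 3) 2 hq (by omega) (by omega)]; norm_num [h.not_ge]; omega
  · rw [ediv_eq_c _ (14 * n + 3) 3 hq (by omega) (by omega)]; norm_num; omega
  · rw [ediv_eq_c _ (14 * n + 3) 3 hq (by omega) (by omega)]; norm_num; omega
  · rcases le_or_gt a (3 * n - 1) with h | h
    · rw [ediv_eq_c _ (14 * n + 3) 4 hq (by omega) (by omega)]; norm_num [h]; omega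
    · rw [ediv_eq_c _ (14 * n + 3) 3 hq (by omega) (by omega)]; norm_num [h.not_ge]; omega
  · rw [ediv_eq_c _ (14 * n + 3) 4 hq (by omega) (by omega)]; norm_num; omega
  · rw [ediv_eq_c _ (14 * n + 3) 4 hq (by omega) (by omega)]; norm_num; omega
  · rcases le_or_gt a (4 * n - 1) with h | h
    · rw [ediv_eq_c _ (14 * n + 3) 5 hq (by omega) (by omega)]; norm_num [h]; omega
    · rw [ediv_eq_c _ (14 * n + 3) 4 hq (by omega) (by omega)]; norm_num [h.not_ge]; omega
  · rw [ediv_eq_c _ (14 * n + 3) 5 hq (by omega) (by omega)]; norm_num; omega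

lemma tau_succ (n k : ℤ) (hk : 0 ≤ k) :
    tau27p3 n (k + 1) = tau27p3 n k + delta27p3 n k := by
  unfold tau27p3
  rw [show (k + 1).toNat = k.toNat + 1 by omega, Finset.sum_range_succ,
    Int.toNat_of_nonneg hk]

def F27 (n a : ℤ) : ℤ :=
  if a ≤ n then -2 * a else if a ≤ 2 * n then -n - a else if a ≤ 3 * n then -3 * n
  else if a ≤ 4 * n then a - 6 * n else 2 * a - 10 * n

lemma F27_eq_max (n a : ℤ) (hn : 1 ≤ n) :
    F27 n a = max (max (-2 * a) (-n - a)) (max (-3 * n) (max (a - 6 * n) (2 * a - 10 * n))) := by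
  unfold F27; split_ifs <;> omega

lemma tau_block (n a : ℤ) (hn : 1 ≤ n) (ha : 0 ≤ a) (ha2 : a ≤ 5 * n) :
    tau27p3 n (14 * a + 14) = tau27p3 n (14 * a) +
      (if a ≤ n - 1 then -2 else if a ≤ 2 * n - 1 then -1 else if a ≤ 3 * n - 1 then 0
       else if a ≤ 4 * n - 1 then 1 else 2) := by
  have ha3 : a ≤ 5 * n + 1 := by omega
  have e0 : tau27p3 n (14 * a + 1) = tau27p3 n (14 * a) + delta27p3 n (14 * a) :=
    tau_succ n (14 * a) (by omega)
  have e : ∀ b : ℤ, 0 ≤ b → tau27p3 n (14 * a + (b + 1)) =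
      tau27p3 n (14 * a + b) + delta27p3 n (14 * a + b) := by
    intro b hb
    have := tau_succ n (14 * a + b) (by omega)
    rwa [show 14 * a + b + 1 = 14 * a + (b + 1) by ring] at this
  have e1 := e 1 (by norm_num); have e2 := e 2 (by norm_num); have e3 := e 3 (by norm_num)
  have e4 := e 4 (by norm_num); have e5 := e 5 (by norm_num); have e6 := e 6 (by norm_num)
  have e7 := e 7 (by norm_num); have e8 := e 8 (by norm_num); have e9 := e 9 (by norm_num)
  have e10 := e 10 (by norm_num); have e11 := e 11 (by norm_num); have e12 := e 12 (by norm_num)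
  have e13 := e 13 (by norm_num)
  norm_num at e1 e2 e3 e4 e5 e6 e7 e8 e9 e10 e11 e12 e13
  have d0 : delta27p3 n (14 * a) = 1 := by
    have := delta_val n a 0 hn ha ha3 (by norm_num) (by norm_num)
    norm_num at this
    exact this
  have d1 := delta_val n a 1 hn ha ha3 (by norm_num) (by norm_num)
  have d2 := delta_val n a 2 hn ha ha3 (by norm_num) (by norm_num)
  have d3 := delta_val n a 3 hn ha ha3 (by norm_num) (by norm_num)
  have d4 := delta_val n a 4 hn ha ha3 (by norm_num) (by norm_num)
  have d5 := delta_val n a 5 hn ha ha3 (by norm_num) (by norm_num)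
  have d6 := delta_val n a 6 hn ha ha3 (by norm_num) (by norm_num)
  have d7 := delta_val n a 7 hn ha ha3 (by norm_num) (by norm_num)
  have d8 := delta_val n a 8 hn ha ha3 (by norm_num) (by norm_num)
  have d9 := delta_val n a 9 hn ha ha3 (by norm_num) (by norm_num)
  have d10 := delta_val n a 10 hn ha ha3 (by norm_num) (by norm_num)
  have d11 := delta_val n a 11 hn ha ha3 (by norm_num) (by norm_num)
  have d12 := delta_val n a 12 hn ha ha3 (by norm_num) (by norm_num)
  have d13 := delta_val n a 13 hn ha ha3 (by norm_num) (by norm_num)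
  norm_num at d1 d2 d3 d4 d5 d6 d7 d8 d9 d10 d11 d12 d13
  split_ifs at d1 d3 d6 d9 d12 ⊢ <;> omega

lemma tau_mul14 (n a : ℤ) (hn : 1 ≤ n) (ha : 0 ≤ a) (ha2 : a ≤ 5 * n + 1) :
    tau27p3 n (14 * a) = F27 n a := by
  lift a to ℕ using ha with t
  induction t with
  | zero =>
    have h0 : tau27p3 n 0 = 0 := by simp [tau27p3]
    simp only [Nat.cast_zero, mul_zero, h0, F27]
    rw [if_pos (by omega : (0 : ℤ) ≤ n)]
  | succ t ih =>
    push_cast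
    push_cast at ha2
    rw [show 14 * ((t : ℤ) + 1) = 14 * (t : ℤ) + 14 by ring,
      tau_block n t hn (by positivity) (by omega), ih (by omega),
      F27_eq_max n _ hn, F27_eq_max n _ hn]
    split_ifs <;> omega

lemma tau_off1 (n a : ℤ) (hn : 1 ≤ n) (ha : 0 ≤ a) (ha2 : a ≤ 5 * n) :
    tau27p3 n (14 * a + 1) = F27 n a + 1 := by
  rw [tau_succ n (14 * a) (by omega), tau_mul14 n a hn ha (by omega)]
  have d0 := delta_val n a 0 hn ha (by omega) (by norm_num) (by norm_num)
  norm_num at d0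
  omega

lemma tau_off6 (n a : ℤ) (hn : 1 ≤ n) (ha : 0 ≤ a) (ha2 : a ≤ 5 * n) :
    tau27p3 n (14 * a + 6) = F27 n a + (if a ≤ n - 1 then -1 else 0) := by
  have e : ∀ b : ℤ, 0 ≤ b → tau27p3 n (14 * a + (b + 1)) =
      tau27p3 n (14 * a + b) + delta27p3 n (14 * a + b) := by
    intro b hb
    have := tau_succ n (14 * a + b) (by omega)
    rwa [show 14 * a + b + 1 = 14 * a + (b + 1) by ring] at this
  have e1 := e 1 (by norm_num); have e2 := e 2 (by norm_num); have e3 := e 3 (by norm_num)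
  have e4 := e 4 (by norm_num); have e5 := e 5 (by norm_num)
  norm_num at e1 e2 e3 e4 e5
  have d1 := delta_val n a 1 hn ha (by omega) (by norm_num) (by norm_num)
  have d2 := delta_val n a 2 hn ha (by omega) (by norm_num) (by norm_num)
  have d3 := delta_val n a 3 hn ha (by omega) (by norm_num) (by norm_num)
  have d4 := delta_val n a 4 hn ha (by omega) (by norm_num) (by norm_num)
  have d5 := delta_val n a 5 hn ha (by omega) (by norm_num) (by norm_num)
  norm_num at d1 d2 d3 d4 d5
  have o1 := tau_off1 n a hn ha ha2
  split_ifs at d1 d3 ⊢ <;> omega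

lemma tau_off7 (n a : ℤ) (hn : 1 ≤ n) (ha : 0 ≤ a) (ha2 : a ≤ 5 * n) :
    tau27p3 n (14 * a + 7) = F27 n a + (if a ≤ n - 1 then -1 else 0)
      + (if a ≤ 2 * n - 1 then 0 else 1) := by
  have e6 : tau27p3 n (14 * a + 7) = tau27p3 n (14 * a + 6) + delta27p3 n (14 * a + 6) := by
    have := tau_succ n (14 * a + 6) (by omega)
    rwa [show 14 * a + 6 + 1 = 14 * a + 7 by ring] at this
  have d6 := delta_val n a 6 hn ha (by omega) (by norm_num) (by norm_num)
  norm_num at d6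
  have o6 := tau_off6 n a hn ha ha2
  split_ifs at d6 o6 ⊢ <;> omega

lemma delta_step (n j : ℤ) (hn : 1 ≤ n) : delta27p3 n j ≤ delta27p3 n (j + 14) := by
  rw [delta_ediv n j hn, delta_ediv n (j + 14) hn]
  have key : (j + 14) * (5 * n + 1) + 14 * n + 2
      = (j * (5 * n + 1) + 14 * n + 1) + 5 * (14 * n + 3) := by ring
  rw [key, Int.add_mul_ediv_right _ _ (by omega : (14 * n + 3 : ℤ) ≠ 0)]
  have mono : (j * (5 * n + 1) + 14 * n + 1) / (14 * n + 3)
      ≤ (j * (5 * n + 1) + 14 * n + 2) / (14 * n + 3) :=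
    Int.ediv_le_ediv (by omega) (by omega)
  generalize (j * (5 * n + 1) + 14 * n + 1) / (14 * n + 3) = Y at mono ⊢
  generalize (j * (5 * n + 1) + 14 * n + 2) / (14 * n + 3) = X at mono ⊢
  omega

lemma delta_tail (n : ℤ) (hn : 1 ≤ n) : ∀ j : ℤ, 70 * n + 6 ≤ j → 0 ≤ delta27p3 n j := by
  have base : ∀ j : ℤ, 70 * n + 6 ≤ j → j ≤ 70 * n + 19 → 0 ≤ delta27p3 n j := by
    intro j h1 h2
    have hd := delta_val n (j / 14) (j % 14) hn (by omega) (by omega) (by omega) (by omega)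
    rw [show 14 * (j / 14) + j % 14 = j by omega] at hd
    split_ifs at hd <;> omega
  have main : ∀ k : ℕ, ∀ j : ℤ, 70 * n + 6 ≤ j → j ≤ 70 * n + 19 + 14 * (k : ℤ) →
      0 ≤ delta27p3 n j := by
    intro k
    induction k with
    | zero => intro j h1 h2; push_cast at h2; exact base j h1 (by omega)
    | succ k ih =>
      intro j h1 h2
      push_cast at h2
      rcases le_or_gt j (70 * n + 19 + 14 * (k : ℤ)) with h | h
      · exact ih j h1 h
      · have hs := delta_step n (j - 14) hn
        rw [show j - 14 + 14 = j by ring] at hs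
        have := ih (j - 14) (by omega) (by omega)
        omega
  intro j hj
  exact main j.toNat j hj (by omega)

/-- Structure of the tau function of `Σ(2,7,14n+3)` (`n ≥ 1`): monotonicity between the
local extrema `M_i`, `m_i`, and the values of `τ` at those extrema. -/
theorem tau_structure_27p3 (n : ℤ) (hn : 1 ≤ n) :
    (∀ i : ℤ, 0 ≤ i → i ≤ 6 * n → ∀ j : ℤ, m27p3 n i ≤ j → j < M27p3 n i →
      tau27p3 n j ≤ tau27p3 n (j + 1)) ∧
    (∀ i : ℤ, 0 ≤ i → i ≤ 6 * n → ∀ j : ℤ, M27p3 n i ≤ j → j < m27p3 n (i + 1) →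
      tau27p3 n (j + 1) ≤ tau27p3 n j) ∧
    (∀ j : ℤ, m27p3 n (6 * n + 1) ≤ j → tau27p3 n j ≤ tau27p3 n (j + 1)) ∧
    (∀ i : ℤ, 0 ≤ i → i ≤ n → tau27p3 n (M27p3 n i) = 1 - 2 * i) ∧
    (∀ i : ℤ, n + 1 ≤ i → i ≤ 2 * n - 1 → tau27p3 n (M27p3 n i) = 1 - n - i) ∧
    (∀ i : ℤ, 2 * n ≤ i → i ≤ 4 * n → tau27p3 n (M27p3 n i) = 1 - 3 * n) ∧
    (∀ i : ℤ, 4 * n + 1 ≤ i → i ≤ 5 * n → tau27p3 n (M27p3 n i) = 1 - 7 * n + i) ∧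
    (∀ i : ℤ, 5 * n + 1 ≤ i → i ≤ 6 * n → tau27p3 n (M27p3 n i) = 1 - 12 * n + 2 * i) ∧
    (∀ i : ℤ, 0 ≤ i → i ≤ n → tau27p3 n (m27p3 n i) = -2 * i) ∧
    (∀ i : ℤ, n + 1 ≤ i → i ≤ 2 * n - 1 → tau27p3 n (m27p3 n i) = -n - i) ∧
    (∀ i : ℤ, 2 * n ≤ i → i ≤ 4 * n + 1 → tau27p3 n (m27p3 n i) = -3 * n) ∧
    (∀ i : ℤ, 4 * n + 2 ≤ i → i ≤ 5 * n → tau27p3 n (m27p3 n i) = -1 - 7 * n + i) ∧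
    (∀ i : ℤ, 5 * n + 1 ≤ i → i ≤ 6 * n + 1 → tau27p3 n (m27p3 n i) = -2 - 12 * n + 2 * i) := by
  refine ⟨?_, ?_, ?_, ?_, ?_, ?_, ?_, ?_, ?_, ?_, ?_, ?_, ?_⟩
  · -- increasing on [m_i, M_i)
    intro i h0 h6 j h1 h2
    have hb : 0 ≤ j ∧ j ≤ 70 * n := by
      simp only [m27p3, M27p3] at h1 h2
      split_ifs at h1 h2 <;> omega
    have hs := tau_succ n j (by omega)
    have hd := delta_val n (j / 14) (j % 14) hn (by omega) (by omega) (by omega) (by omega)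
    rw [show 14 * (j / 14) + j % 14 = j by omega] at hd
    simp only [m27p3, M27p3] at h1 h2
    split_ifs at h1 h2 <;> split_ifs at hd <;> omega
  · -- decreasing on [M_i, m_{i+1})
    intro i h0 h6 j h1 h2
    have hb : 0 ≤ j ∧ j ≤ 70 * n + 5 := by
      simp only [m27p3, M27p3] at h1 h2
      split_ifs at h1 h2 <;> omega
    have hs := tau_succ n j (by omega)
    have hd := delta_val n (j / 14) (j % 14) hn (by omega) (by omega) (by omega) (by omega)
    rw [show 14 * (j / 14) + j % 14 = j by omega] at hd
    simp only [m27p3, M27p3] at h1 h2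
    split_ifs at h1 h2 <;> split_ifs at hd <;> omega
  · -- increasing tail
    intro j hj
    have hm : m27p3 n (6 * n + 1) = 70 * n + 6 := by
      simp only [m27p3]; split_ifs <;> omega
    rw [hm] at hj
    have hs := tau_succ n j (by omega)
    have := delta_tail n hn j hj
    omega
  · -- τ(M_i) for 0 ≤ i ≤ n
    intro i h1 h2
    have hM : M27p3 n i = 14 * i + 1 := by
      simp only [M27p3]; rw [if_pos (by omega : i ≤ 2 * n)]
    rw [hM, tau_off1 n i hn (by omega) (by omega), F27_eq_max n i hn]
    omega
  · -- τ(M_i) for n+1 ≤ i ≤ 2n-1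
    intro i h1 h2
    have hM : M27p3 n i = 14 * i + 1 := by
      simp only [M27p3]; rw [if_pos (by omega : i ≤ 2 * n)]
    rw [hM, tau_off1 n i hn (by omega) (by omega), F27_eq_max n i hn]
    omega
  · -- τ(M_i) for 2n ≤ i ≤ 4n
    intro i h1 h2
    rcases le_or_gt i (2 * n) with h | h
    · have hM : M27p3 n i = 14 * i + 1 := by
        simp only [M27p3]; rw [if_pos h]
      rw [hM, tau_off1 n i hn (by omega) (by omega), F27_eq_max n i hn]
      omega
    · have hp : i % 2 = 0 ∨ i % 2 = 1 := by omega
      rcases hp with hp | hp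
      · have hM : M27p3 n i = 14 * (n + i / 2) + 1 := by
          simp only [M27p3]; rw [if_neg (by omega), if_pos (by omega), if_pos hp]
        rw [hM, tau_off1 n (n + i / 2) hn (by omega) (by omega), F27_eq_max n _ hn]
        omega
      · have hM : M27p3 n i = 14 * (n + (i - 1) / 2) + 7 := by
          simp only [M27p3]; rw [if_neg (by omega), if_pos (by omega), if_neg (by omega)]
        rw [hM, tau_off7 n (n + (i - 1) / 2) hn (by omega) (by omega), F27_eq_max n _ hn]
        split_ifs <;> omega
  · -- τ(M_i) for 4n+1 ≤ i ≤ 5n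
    intro i h1 h2
    have hM : M27p3 n i = 14 * (i - n) + 1 := by
      simp only [M27p3]; rw [if_neg (by omega), if_neg (by omega)]
    rw [hM, tau_off1 n (i - n) hn (by omega) (by omega), F27_eq_max n _ hn]
    omega
  · -- τ(M_i) for 5n+1 ≤ i ≤ 6n
    intro i h1 h2
    have hM : M27p3 n i = 14 * (i - n) + 1 := by
      simp only [M27p3]; rw [if_neg (by omega), if_neg (by omega)]
    rw [hM, tau_off1 n (i - n) hn (by omega) (by omega), F27_eq_max n _ hn]
    omega
  · -- τ(m_i) for 0 ≤ i ≤ n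
    intro i h1 h2
    have hm : m27p3 n i = 14 * i := by
      simp only [m27p3]; rw [if_pos (by omega : i ≤ 2 * n)]
    rw [hm, tau_mul14 n i hn (by omega) (by omega), F27_eq_max n i hn]
    omega
  · -- τ(m_i) for n+1 ≤ i ≤ 2n-1
    intro i h1 h2
    have hm : m27p3 n i = 14 * i := by
      simp only [m27p3]; rw [if_pos (by omega : i ≤ 2 * n)]
    rw [hm, tau_mul14 n i hn (by omega) (by omega), F27_eq_max n i hn]
    omega
  · -- τ(m_i) for 2n ≤ i ≤ 4n+1
    intro i h1 h2
    rcases le_or_gt i (2 * n) with h | h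
    · have hm : m27p3 n i = 14 * i := by
        simp only [m27p3]; rw [if_pos h]
      rw [hm, tau_mul14 n i hn (by omega) (by omega), F27_eq_max n i hn]
      omega
    · have hp : i % 2 = 0 ∨ i % 2 = 1 := by omega
      rcases hp with hp | hp
      · have hm : m27p3 n i = 14 * (n + i / 2) := by
          simp only [m27p3]; rw [if_neg (by omega), if_pos (by omega), if_pos hp]
        rw [hm, tau_mul14 n (n + i / 2) hn (by omega) (by omega), F27_eq_max n _ hn]
        omega
      · have hm : m27p3 n i = 14 * (n + (i - 1) / 2) + 6 := by
          simp only [m27p3]; rw [if_neg (by omega), if_pos (by omega), if_neg (by omega)]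
        rw [hm, tau_off6 n (n + (i - 1) / 2) hn (by omega) (by omega), F27_eq_max n _ hn]
        split_ifs <;> omega
  · -- τ(m_i) for 4n+2 ≤ i ≤ 5n
    intro i h1 h2
    have hm : m27p3 n i = 14 * (i - n - 1) + 6 := by
      simp only [m27p3]; rw [if_neg (by omega), if_neg (by omega)]; ring
    rw [hm, tau_off6 n (i - n - 1) hn (by omega) (by omega), F27_eq_max n _ hn]
    split_ifs <;> omega
  · -- τ(m_i) for 5n+1 ≤ i ≤ 6n+1
    intro i h1 h2
    have hm : m27p3 n i = 14 * (i - n - 1) + 6 := by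
      simp only [m27p3]; rw [if_neg (by omega), if_neg (by omega)]; ring
    rw [hm, tau_off6 n (i - n - 1) hn (by omega) (by omega), F27_eq_max n _ hn]
    split_ifs <;> omega
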